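/- MPE2 symbolization is equivalent to the arithmetic-pattern symbolization: for vectors U, V of length D, α(U) = α(V) if and only if σ(U) = σ(V), where σ(W) = (π(W), e(W)) consists of the sorting permutation π(W) (ascending, ties broken by smaller index first) and the tie-indicator vector e(W) with e_i = 1 iff the i-th and (i−1)-th elements in the sorted order of W are equal. -/

import Mathlib

section aux

variable {D : ℕ}

/-- the rank function α -/
private noncomputable def rk (W : Fin D → ℝ) (i : Fin D) : ℕ :=
  ((Finset.image W Finset.univ).filter (fun x => x < W i)).card

private lemma rk_mono {W : Fin D → ℝ} {i k : Fin D} (h : W i < W k) : rk W i < rk W k := by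
  apply Finset.card_lt_card
  constructor
  · intro x hx
    simp only [Finset.mem_filter] at hx ⊢
    exact ⟨hx.1, hx.2.trans h⟩
  · intro hsub
    have : W i ∈ (Finset.image W Finset.univ).filter (fun x => x < W i) := by
      apply hsub
      simp only [Finset.mem_filter, Finset.mem_image]
      exact ⟨⟨i, Finset.mem_univ i, rfl⟩, h⟩
    simp at this

private lemma rk_congr {W : Fin D → ℝ} {i k : Fin D} (h : W i = W k) : rk W i = rk W k := by
  unfold rk; rw [h]

private lemma rk_lt_iff {W : Fin D → ℝ} {i k : Fin D} : rk W i < rk W k ↔ W i < W k := by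
  constructor
  · intro h
    rcases lt_trichotomy (W i) (W k) with h' | h' | h'
    · exact h'
    · exact absurd (rk_congr h') h.ne
    · exact absurd (rk_mono h') (by omega)
  · exact rk_mono

private lemma rk_eq_iff {W : Fin D → ℝ} {i k : Fin D} : rk W i = rk W k ↔ W i = W k := by
  constructor
  · intro h
    rcases lt_trichotomy (W i) (W k) with h' | h' | h'
    · exact absurd (rk_mono h') (by omega)
    · exact h'
    · exact absurd (rk_mono h') (by omega)
  · exact rk_congr

/-- uniqueness of the sorting permutation, determined by ranks -/
private lemma perm_unique (a : Fin D → ℕ) (p q : Equiv.Perm (Fin D))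
    (hp : ∀ j k : Fin D, j < k → a (p j) < a (p k) ∨ (a (p j) = a (p k) ∧ p j < p k))
    (hq : ∀ j k : Fin D, j < k → a (q j) < a (q k) ∨ (a (q j) = a (q k) ∧ q j < q k)) :
    p = q := by
  set key : Fin D → ℕ ×ₗ (Fin D) := fun i => toLex (a i, i) with hkey
  have hkinj : Function.Injective key := by
    intro x y hxy
    have := congrArg (fun z => (ofLex z).2) hxy
    simpa [hkey] using this
  have hmono : ∀ (r : Equiv.Perm (Fin D)),
      (∀ j k : Fin D, j < k → a (r j) < a (r k) ∨ (a (r j) = a (r k) ∧ r j < r k)) →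
      StrictMono (fun j => key (r j)) := by
    intro r hr j k hjk
    rcases hr j k hjk with h | ⟨h1, h2⟩
    · exact Prod.Lex.left _ _ h
    · rw [hkey]; dsimp only
      rw [h1]
      exact Prod.Lex.right _ h2
  have hrange : Set.range (fun j => key (p j)) = Set.range (fun j => key (q j)) := by
    ext x
    constructor
    · rintro ⟨j, rfl⟩
      exact ⟨q.symm (p j), by simp⟩
    · rintro ⟨j, rfl⟩
      exact ⟨p.symm (q j), by simp⟩
  haveI : WellFoundedLT (Fin D) := Finite.to_wellFoundedLT
  have := ((hmono p hp).range_inj (hmono q hq)).1 hrange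
  ext j : 1
  exact hkinj (congrFun this j)

private lemma sorted_le {W : Fin D → ℝ} {p : Equiv.Perm (Fin D)}
    (hp : ∀ j k : Fin D, j < k → W (p j) < W (p k) ∨ (W (p j) = W (p k) ∧ p j < p k))
    {j k : Fin D} (h : j ≤ k) : W (p j) ≤ W (p k) := by
  rcases eq_or_lt_of_le h with rfl | h'
  · exact le_refl _
  · rcases hp j k h' with h'' | ⟨h'', _⟩
    · exact le_of_lt h''
    · exact le_of_eq h''

end aux

theorem mpe2_equivalent_to_arithmetic (n : ℕ) (U V : Fin (n + 1) → ℝ)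
    (pU pV : Equiv.Perm (Fin (n + 1)))
    (hpU : ∀ j k : Fin (n + 1), j < k →
      (U (pU j) < U (pU k) ∨ (U (pU j) = U (pU k) ∧ pU j < pU k)))
    (hpV : ∀ j k : Fin (n + 1), j < k →
      (V (pV j) < V (pV k) ∨ (V (pV j) = V (pV k) ∧ pV j < pV k))) :
    ((fun i => ((Finset.image U Finset.univ).filter (fun x => x < U i)).card) =
      (fun i => ((Finset.image V Finset.univ).filter (fun x => x < V i)).card)) ↔
    (pU = pV ∧
      (fun i : Fin n => decide (U (pU i.succ) = U (pU i.castSucc))) =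
        (fun i : Fin n => decide (V (pV i.succ) = V (pV i.castSucc)))) := by
  have hrkU : (fun i => ((Finset.image U Finset.univ).filter (fun x => x < U i)).card) = rk U :=
    rfl
  have hrkV : (fun i => ((Finset.image V Finset.univ).filter (fun x => x < V i)).card) = rk V :=
    rfl
  rw [hrkU, hrkV]
  constructor
  · intro hα
    have hpU' : ∀ j k : Fin (n + 1), j < k →
        rk U (pU j) < rk U (pU k) ∨ (rk U (pU j) = rk U (pU k) ∧ pU j < pU k) := by
      intro j k hjk
      rcases hpU j k hjk with h | ⟨h1, h2⟩
      · exact Or.inl (rk_mono h)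
      · exact Or.inr ⟨rk_congr h1, h2⟩
    have hpV' : ∀ j k : Fin (n + 1), j < k →
        rk U (pV j) < rk U (pV k) ∨ (rk U (pV j) = rk U (pV k) ∧ pV j < pV k) := by
      intro j k hjk
      rcases hpV j k hjk with h | ⟨h1, h2⟩
      · exact Or.inl (hα ▸ rk_mono h)
      · exact Or.inr ⟨hα ▸ rk_congr h1, h2⟩
    have hpp : pU = pV := perm_unique (rk U) pU pV hpU' hpV'
    refine ⟨hpp, ?_⟩
    funext i
    have h1 : (U (pU i.succ) = U (pU i.castSucc)) ↔ (V (pV i.succ) = V (pV i.castSucc)) := by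
      rw [← rk_eq_iff (W := U), ← rk_eq_iff (W := V), hα, hpp]
    simp only [decide_eq_decide]
    exact h1
  · rintro ⟨hpp, he⟩
    -- show rk U (pU j) = rk V (pV j) by induction on j, then conclude
    have key : ∀ j : Fin (n + 1), rk U (pU j) = rk V (pV j) := by
      have step : ∀ (W : Fin (n + 1) → ℝ) (p : Equiv.Perm (Fin (n + 1)))
          (hp : ∀ j k : Fin (n + 1), j < k →
            W (p j) < W (p k) ∨ (W (p j) = W (p k) ∧ p j < p k))
          (i : Fin n), W (p i.castSucc) < W (p i.succ) →
          rk W (p i.succ) = rk W (p i.castSucc) + 1 := by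
        intro W p hp i hlt
        have hset : (Finset.image W Finset.univ).filter (fun x => x < W (p i.succ)) =
            insert (W (p i.castSucc))
              ((Finset.image W Finset.univ).filter (fun x => x < W (p i.castSucc))) := by
          ext x
          simp only [Finset.mem_insert, Finset.mem_filter, Finset.mem_image, Finset.mem_univ,
            true_and]
          constructor
          · rintro ⟨⟨m, rfl⟩, hx⟩
            set k := p.symm m with hk
            have hm : m = p k := by rw [hk, Equiv.apply_symm_apply]
            rcases le_or_gt k i.castSucc with hki | hki
            · have := sorted_le hp hki
              rw [← hm] at this
              rcases eq_or_lt_of_le this with h | h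
              · exact Or.inl h
              · exact Or.inr ⟨⟨m, rfl⟩, h⟩
            · have hki' : i.succ ≤ k := hki
              have := sorted_le hp hki'
              rw [← hm] at this
              exact absurd hx (not_lt.2 this)
          · rintro (rfl | ⟨hm, hx⟩)
            · exact ⟨⟨p i.castSucc, rfl⟩, hlt⟩
            · exact ⟨hm, hx.trans hlt⟩
        have hnotmem : W (p i.castSucc) ∉
            (Finset.image W Finset.univ).filter (fun x => x < W (p i.castSucc)) := by
          simp
        rw [rk, rk, hset, Finset.card_insert_of_notMem hnotmem]
      have base : ∀ (W : Fin (n + 1) → ℝ) (p : Equiv.Perm (Fin (n + 1)))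
          (hp : ∀ j k : Fin (n + 1), j < k →
            W (p j) < W (p k) ∨ (W (p j) = W (p k) ∧ p j < p k)),
          rk W (p 0) = 0 := by
        intro W p hp
        rw [rk, Finset.card_eq_zero, Finset.filter_eq_empty_iff]
        rintro x hx
        simp only [Finset.mem_image, Finset.mem_univ, true_and] at hx
        obtain ⟨m, rfl⟩ := hx
        have hm : m = p (p.symm m) := (Equiv.apply_symm_apply p m).symm
        have : W (p 0) ≤ W (p (p.symm m)) := sorted_le hp (Fin.zero_le _)
        rw [← hm] at this
        exact not_lt.2 this
      intro j
      induction j using Fin.induction with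
      | zero => rw [base U pU hpU, base V pV hpV]
      | succ i ih =>
        have hei := congrFun he i
        simp only [decide_eq_decide] at hei
        by_cases hcase : U (pU i.succ) = U (pU i.castSucc)
        · have hv : V (pV i.succ) = V (pV i.castSucc) := hei.1 hcase
          rw [rk_congr hcase, rk_congr hv, ih]
        · have hu : U (pU i.castSucc) < U (pU i.succ) := by
            rcases hpU i.castSucc i.succ Fin.castSucc_lt_succ with h | ⟨h, _⟩
            · exact h
            · exact absurd h.symm hcase
          have hvne : ¬ V (pV i.succ) = V (pV i.castSucc) := fun h => hcase (hei.2 h)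
          have hv : V (pV i.castSucc) < V (pV i.succ) := by
            rcases hpV i.castSucc i.succ Fin.castSucc_lt_succ with h | ⟨h, _⟩
            · exact h
            · exact absurd h.symm hvne
          rw [step U pU hpU i hu, step V pV hpV i hv, ih]
    funext i
    have h1 : rk U i = rk U (pU (pU.symm i)) := by rw [Equiv.apply_symm_apply]
    have h2 : rk V i = rk V (pV (pV.symm i)) := by rw [Equiv.apply_symm_apply]
    rw [h1, h2, ← hpp, key (pU.symm i)]
    rw [hpp]
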